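/- Let f_i(x) = ρx + b_i (i = 1,…,N) be an equi-contractive IFS on ℝ with 0 = b_1 < b_2 < … < b_N = 1 − ρ whose attractor E is totally self-similar. Let n ≥ 1, let Δ = [a,b] ∈ ℱ_n and Δ̂ = [c,d] ∈ ℱ_{n−1} with Δ ⊂ Δ̂. Then for every σ ∈ 𝒜_{n−1} with f_σ(E) ∩ (c,d) ≠ ∅, there exists k ∈ {1,…,N} such that f_{σ∗k}(E) ∩ (a,b) ≠ ∅, where σ∗k denotes the word σ followed by the letter k. -/

import Mathlib

open Set

/-- For a word `σ = σ₁…σₙ`, the composition `f_{σ₁} ∘ ⋯ ∘ f_{σₙ}`. -/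
def iterMap {N : ℕ} (f : Fin N → ℝ → ℝ) : List (Fin N) → ℝ → ℝ
  | [] => id
  | i :: σ => f i ∘ iterMap f σ

/-- The set `P_n = {f_σ(0) : σ ∈ 𝒜_n} ∪ {f_σ(1) : σ ∈ 𝒜_n}`. -/
def PnSet {N : ℕ} (f : Fin N → ℝ → ℝ) (n : ℕ) : Set ℝ :=
  {x | ∃ σ : List (Fin N), σ.length = n ∧ (iterMap f σ 0 = x ∨ iterMap f σ 1 = x)}

/-- `[a,b]` is a basic net interval of order `n`. -/
def IsNetInterval {N : ℕ} (f : Fin N → ℝ → ℝ) (E : Set ℝ) (n : ℕ) (a b : ℝ) : Prop :=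
  a ∈ PnSet f n ∧ b ∈ PnSet f n ∧ a < b ∧
    (∀ y ∈ PnSet f n, y ≤ a ∨ b ≤ y) ∧ (Set.Ioo a b ∩ E).Nonempty

theorem stmt2
    (N : ℕ) (hN : 2 ≤ N) (ρ : ℝ) (hρ : ρ ∈ Set.Ioo (0 : ℝ) 1)
    (b : Fin N → ℝ) (hb : StrictMono b)
    (hb0 : b ⟨0, by omega⟩ = 0) (hbN : b ⟨N - 1, by omega⟩ = 1 - ρ)
    (f : Fin N → ℝ → ℝ) (hf : ∀ i x, f i x = ρ * x + b i)
    (E : Set ℝ) (hEcpt : IsCompact E) (hEne : E.Nonempty)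
    (hE : E = ⋃ i, f i '' E)
    -- total self-similarity of E
    (hTSS : ∀ ω : List (Fin N), ω ≠ [] →
      iterMap f ω '' E = iterMap f ω '' Set.Icc 0 1 ∩ E)
    (n : ℕ) (hn : 1 ≤ n) (a b' c d : ℝ)
    (hΔ : IsNetInterval f E n a b') (hΔhat : IsNetInterval f E (n - 1) c d)
    (hsub : Set.Icc a b' ⊆ Set.Icc c d)
    (σ : List (Fin N)) (hσ : σ.length = n - 1)
    (hmeet : (iterMap f σ '' E ∩ Set.Ioo c d).Nonempty) :
    ∃ k : Fin N, (iterMap f (σ ++ [k]) '' E ∩ Set.Ioo a b').Nonempty := by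
  obtain ⟨hρ0, hρ1⟩ := hρ
  -- affine formula for iterMap
  have haff : ∀ (τ : List (Fin N)) (x : ℝ),
      iterMap f τ x = ρ ^ τ.length * x + iterMap f τ 0 := by
    intro τ
    induction τ with
    | nil => intro x; simp [iterMap]
    | cons i τ ih =>
      intro x
      simp only [iterMap, Function.comp_apply, hf, List.length_cons]
      rw [ih x]
      ring
  have happ : ∀ (τ : List (Fin N)) (k : Fin N) (x : ℝ),
      iterMap f (τ ++ [k]) x = iterMap f τ (f k x) := by
    intro τ k x
    induction τ with
    | nil => simp [iterMap]
    | cons i τ ih => simp [iterMap, Function.comp_apply, ih]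
  -- bounds on the b i
  have hble : ∀ i : Fin N, b i ≤ 1 - ρ := by
    intro i
    rw [← hbN]
    exact hb.monotone (by rw [Fin.le_def]; simp only [Fin.val_mk]; omega)
  have hbge : ∀ i : Fin N, 0 ≤ b i := by
    intro i
    rw [← hb0]
    exact hb.monotone (Fin.le_def.mpr (Nat.zero_le _))
  -- E ⊆ [0,1]
  have hE01 : E ⊆ Set.Icc 0 1 := by
    have hM := hEcpt.sSup_mem hEne
    have hm := hEcpt.sInf_mem hEne
    have hM' : sSup E ∈ ⋃ i, f i '' E := hE ▸ hM
    have hm' : sInf E ∈ ⋃ i, f i '' E := hE ▸ hm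
    obtain ⟨i, y, hyE, hy⟩ := Set.mem_iUnion.mp hM'
    obtain ⟨j, z, hzE, hz⟩ := Set.mem_iUnion.mp hm'
    have hyM : y ≤ sSup E := le_csSup hEcpt.bddAbove hyE
    have hzm : sInf E ≤ z := csInf_le hEcpt.bddBelow hzE
    have hM1 : sSup E ≤ 1 := by
      have := hf i y
      have hbi := hble i
      nlinarith [hy]
    have hm0 : 0 ≤ sInf E := by
      have := hf j z
      have hbj := hbge j
      nlinarith [hz]
    intro x hx
    exact ⟨le_trans hm0 (csInf_le hEcpt.bddBelow hx),
      le_trans (le_csSup hEcpt.bddAbove hx) hM1⟩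
  have hlpos : (0:ℝ) < ρ ^ σ.length := pow_pos hρ0 _
  obtain ⟨w, ⟨y, hyE, hwy⟩, hw⟩ := hmeet
  obtain ⟨hy0, hy1⟩ := hE01 hyE
  have hσ0mem : iterMap f σ 0 ∈ PnSet f (n - 1) := ⟨σ, hσ, Or.inl rfl⟩
  have hσ1mem : iterMap f σ 1 ∈ PnSet f (n - 1) := ⟨σ, hσ, Or.inr rfl⟩
  have h0w : iterMap f σ 0 ≤ w := by
    rw [← hwy, haff σ y]; nlinarith
  have hw1 : w ≤ iterMap f σ 1 := by
    rw [← hwy, haff σ y, haff σ 1]; nlinarith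
  have h0c : iterMap f σ 0 ≤ c := by
    rcases hΔhat.2.2.2.1 _ hσ0mem with h | h
    · exact h
    · linarith [hw.2]
  have hd1 : d ≤ iterMap f σ 1 := by
    rcases hΔhat.2.2.2.1 _ hσ1mem with h | h
    · linarith [hw.1]
    · exact h
  obtain ⟨x, hxab, hxE⟩ := hΔ.2.2.2.2
  have hxcd : x ∈ Set.Icc c d := hsub ⟨le_of_lt hxab.1, le_of_lt hxab.2⟩
  have hx01 : x ∈ iterMap f σ '' Set.Icc 0 1 := by
    refine ⟨(x - iterMap f σ 0) / ρ ^ σ.length, ⟨?_, ?_⟩, ?_⟩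
    · exact div_nonneg (by linarith [hxcd.1]) hlpos.le
    · rw [div_le_one hlpos]
      have := haff σ 1
      have := hxcd.2
      linarith
    · rw [haff]; field_simp; ring
  have hxσE : x ∈ iterMap f σ '' E := by
    by_cases hσnil : σ = []
    · subst hσnil; simpa [iterMap] using hxE
    · rw [hTSS σ hσnil]; exact ⟨hx01, hxE⟩
  obtain ⟨y2, hy2E, hxy2⟩ := hxσE
  have hy2' : y2 ∈ ⋃ i, f i '' E := hE ▸ hy2E
  obtain ⟨k, z, hzE, hzy⟩ := Set.mem_iUnion.mp hy2'
  refine ⟨k, x, ⟨z, hzE, ?_⟩, hxab⟩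
  rw [happ, hzy, hxy2]
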